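/- Let i ≥ 2, n ≥ 1, and let B_1, …, B_i be n × n matrices with entries in k. Let ∂, σ : S_i^n → S_i^n be the S_i-linear maps given by the matrices x·I_n + Σ_{j=1}^i B_j·y_j and x·I_n − Σ_{j=1}^i B_j·y_j respectively. Then the image of ∂ (i.e., the first syzygy module of coker ∂) is isomorphic as an S_i-module to coker σ = S_i^n / range σ; consequently a minimal complete resolution of coker ∂ is periodic of period at most 2. -/

import Mathlib

set_option synthInstance.maxHeartbeats 1000000
set_option maxHeartbeats 1000000

open MvPolynomial

noncomputable section

/-- The defining ideal `(X², (Y₁,…,Y_i)²)` of `S_i` in `k[X,Y₁,…,Y_i]`;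
the variable `X 0` plays the role of `X` and `X j.succ` the role of `Y_j`. -/
abbrev SIdeal (k : Type) [Field k] (i : ℕ) : Ideal (MvPolynomial (Fin (i + 1)) k) :=
  Ideal.span ({X 0 ^ 2} ∪ {p | ∃ a b : Fin i, p = X a.succ * X b.succ})

/-- `S_i = k[X,Y₁,…,Y_i]/(X², (Y₁,…,Y_i)²)`. -/
abbrev Sring (k : Type) [Field k] (i : ℕ) := MvPolynomial (Fin (i + 1)) k ⧸ SIdeal k i

/-- `x`, the residue class of `X` in `S_i`. -/
abbrev xS (k : Type) [Field k] (i : ℕ) : Sring k i := Ideal.Quotient.mk _ (X 0)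

/-- `y_j`, the residue class of `Y_j` in `S_i`. -/
abbrev yS (k : Type) [Field k] (i : ℕ) (j : Fin i) : Sring k i :=
  Ideal.Quotient.mk _ (X j.succ)

/-- The maximal ideal `𝔫_i = (x, y₁, …, y_i)` of `S_i`. -/
abbrev nS (k : Type) [Field k] (i : ℕ) : Ideal (Sring k i) :=
  Ideal.span ({xS k i} ∪ Set.range (yS k i))

namespace Stmt10Aux

variable (k : Type) [Field k] (i : ℕ)

lemma x_mul_x : xS k i * xS k i = 0 := by
  rw [xS, ← map_mul, ← sq, Ideal.Quotient.eq_zero_iff_mem]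
  exact Ideal.subset_span (Or.inl rfl)

lemma y_mul_y (j l : Fin i) : yS k i j * yS k i l = 0 := by
  rw [yS, ← map_mul, Ideal.Quotient.eq_zero_iff_mem]
  exact Ideal.subset_span (Or.inr ⟨j, l, rfl⟩)

abbrev Amodel := TrivSqZeroExt (DualNumber k) (Fin i → DualNumber k)

def gmodel : Fin (i + 1) → Amodel k i :=
  Fin.cases (TrivSqZeroExt.inl (DualNumber.eps)) (fun j => TrivSqZeroExt.inr (Pi.single j 1))

lemma gmodel_zero : gmodel k i 0 = TrivSqZeroExt.inl DualNumber.eps := rfl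

lemma gmodel_succ (j : Fin i) : gmodel k i j.succ = TrivSqZeroExt.inr (Pi.single j 1) :=
  Fin.cases_succ _

def phi : Sring k i →ₐ[k] Amodel k i :=
  Ideal.Quotient.liftₐ (SIdeal k i) (aeval (gmodel k i)) (by
    intro p hp
    refine Submodule.span_induction (p := fun q _ => (aeval (gmodel k i)) q = 0) ?_ ?_ ?_ ?_ hp
    · rintro q (rfl | ⟨a, b, rfl⟩)
      · rw [map_pow, aeval_X, gmodel_zero, sq, TrivSqZeroExt.inl_mul_inl,
          DualNumber.eps_mul_eps, TrivSqZeroExt.inl_zero]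
      · simp [gmodel_succ, TrivSqZeroExt.inr_mul_inr]
    · simp
    · intro a b _ _ ha hb; simp [ha, hb]
    · intro a b _ hb; simp [smul_eq_mul, hb])

lemma phi_x : phi k i (xS k i) = TrivSqZeroExt.inl DualNumber.eps := by
  simp [phi, xS, gmodel_zero]
  exact (aeval_X (gmodel k i) 0).trans (gmodel_zero k i)

lemma phi_y (j : Fin i) : phi k i (yS k i j) = TrivSqZeroExt.inr (Pi.single j 1) := by
  simp [phi, yS, gmodel_succ]
  exact (aeval_X (gmodel k i) j.succ).trans (gmodel_succ k i j)

lemma span_decomp (s : Sring k i) : ∃ (a b : k) (c e : Fin i → k),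
    s = algebraMap k (Sring k i) a + algebraMap k (Sring k i) b * xS k i +
      (∑ j, algebraMap k (Sring k i) (c j) * yS k i j) +
      (∑ j, algebraMap k (Sring k i) (e j) * (xS k i * yS k i j)) := by
  obtain ⟨P, rfl⟩ := Ideal.Quotient.mk_surjective s
  induction P using MvPolynomial.induction_on with
  | C r =>
      refine ⟨r, 0, 0, 0, ?_⟩
      simp [Ideal.Quotient.algebraMap_eq]
      rfl
  | add P Q hP hQ =>
      obtain ⟨a, b, c, e, h1⟩ := hP
      obtain ⟨a', b', c', e', h2⟩ := hQ
      refine ⟨a + a', b + b', c + c', e + e', ?_⟩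
      rw [map_add, h1, h2]
      simp only [map_add, add_mul, Pi.add_apply, Finset.sum_add_distrib]
      ring
  | mul_X P a hP =>
      obtain ⟨a0, b0, c0, e0, h1⟩ := hP
      rw [map_mul]
      induction a using Fin.cases with
      | zero =>
          refine ⟨0, a0, 0, c0, ?_⟩
          rw [h1]
          have h2 : ∀ j, algebraMap k (Sring k i) (c0 j) * yS k i j * xS k i
              = algebraMap k (Sring k i) (c0 j) * (xS k i * yS k i j) := fun j => by ring
          have h3 : ∀ j, algebraMap k (Sring k i) (e0 j) * (xS k i * yS k i j) * xS k i = 0 :=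
            fun j => by
              rw [show algebraMap k (Sring k i) (e0 j) * (xS k i * yS k i j) * xS k i
                = algebraMap k (Sring k i) (e0 j) * (xS k i * xS k i) * yS k i j from by ring,
                x_mul_x]
              ring
          rw [add_mul, add_mul, add_mul, Finset.sum_mul, Finset.sum_mul,
            Finset.sum_congr rfl (fun j _ => h2 j), Finset.sum_congr rfl (fun j _ => h3 j)]
          rw [show algebraMap k (Sring k i) b0 * xS k i * xS k i
            = algebraMap k (Sring k i) b0 * (xS k i * xS k i) from by ring, x_mul_x]
          simp
      | succ l =>
          refine ⟨0, 0, fun j => if j = l then a0 else 0, fun j => if j = l then b0 else 0, ?_⟩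
          rw [h1]
          have h2 : ∀ j, algebraMap k (Sring k i) (c0 j) * yS k i j * yS k i l = 0 := fun j => by
            rw [mul_assoc, y_mul_y]; ring
          have h3 : ∀ j, algebraMap k (Sring k i) (e0 j) * (xS k i * yS k i j) * yS k i l = 0 :=
            fun j => by
              rw [show algebraMap k (Sring k i) (e0 j) * (xS k i * yS k i j) * yS k i l
                = algebraMap k (Sring k i) (e0 j) * xS k i * (yS k i j * yS k i l) from by ring,
                y_mul_y]
              ring
          rw [add_mul, add_mul, add_mul, Finset.sum_mul, Finset.sum_mul,
            Finset.sum_congr rfl (fun j _ => h2 j), Finset.sum_congr rfl (fun j _ => h3 j)]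
          simp [apply_ite (algebraMap k (Sring k i)), ite_mul, Finset.sum_ite_eq']
          ring

lemma indep (a b : k) (c e : Fin i → k)
    (h : algebraMap k (Sring k i) a + algebraMap k (Sring k i) b * xS k i +
      (∑ j, algebraMap k (Sring k i) (c j) * yS k i j) +
      (∑ j, algebraMap k (Sring k i) (e j) * (xS k i * yS k i j)) = 0) :
    a = 0 ∧ b = 0 ∧ (∀ j, c j = 0) ∧ (∀ j, e j = 0) := by
  have h2 := congrArg (phi k i) h
  rw [map_zero] at h2
  simp only [map_add, map_mul, map_sum, phi_x, phi_y, AlgHom.commutes,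
    TrivSqZeroExt.algebraMap_eq_inl', TrivSqZeroExt.inl_mul_inl,
    TrivSqZeroExt.inl_mul_inr] at h2
  have hfst := congrArg TrivSqZeroExt.fst h2
  have hsnd := congrArg TrivSqZeroExt.snd h2
  simp only [TrivSqZeroExt.fst_add, TrivSqZeroExt.fst_sum, TrivSqZeroExt.fst_inl,
    TrivSqZeroExt.fst_inr, TrivSqZeroExt.fst_zero, Finset.sum_const_zero, add_zero] at hfst
  simp only [TrivSqZeroExt.snd_add, TrivSqZeroExt.snd_sum, TrivSqZeroExt.snd_inl,
    TrivSqZeroExt.snd_inr, TrivSqZeroExt.snd_zero, Finset.sum_const_zero, zero_add] at hsnd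
  have ha : a = 0 := by simpa using congrArg TrivSqZeroExt.fst hfst
  have hb : b = 0 := by simpa using congrArg TrivSqZeroExt.snd hfst
  have hce : ∀ l, c l = 0 ∧ e l = 0 := by
    intro l
    have h3 := congrFun hsnd l
    simp only [Finset.sum_apply, Pi.add_apply, Pi.smul_apply, Pi.single_apply, smul_ite,
      smul_zero, Finset.sum_ite_eq', Finset.mem_univ, if_true, Pi.zero_apply] at h3
    refine ⟨?_, ?_⟩
    · simpa using congrArg TrivSqZeroExt.fst h3
    · simpa using congrArg TrivSqZeroExt.snd h3
  exact ⟨ha, hb, fun l => (hce l).1, fun l => (hce l).2⟩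

end Stmt10Aux

namespace Stmt10Gen
open Matrix

variable {k : Type} [Field k] {R : Type} [CommRing R] [Algebra k R]
variable {i n : ℕ}

lemma sum_mulVec {ι : Type*} (s : Finset ι) (f : ι → Matrix (Fin n) (Fin n) R)
    (w : Fin n → R) : (∑ j ∈ s, f j) *ᵥ w = ∑ j ∈ s, f j *ᵥ w := by
  induction s using Finset.cons_induction with
  | empty => simp [Matrix.zero_mulVec]
  | cons a s ha ih => simp [Finset.sum_cons, Matrix.add_mulVec, ih]

lemma mulVec_sumv {ι : Type*} (s : Finset ι) (C : Matrix (Fin n) (Fin n) R)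
    (g : ι → (Fin n → R)) : C *ᵥ (∑ l ∈ s, g l) = ∑ l ∈ s, C *ᵥ g l := by
  induction s using Finset.cons_induction with
  | empty => simp [Matrix.mulVec_zero]
  | cons a s ha ih => simp [Finset.sum_cons, Matrix.mulVec_add, ih]

variable (x : R) (y : Fin i → R)

lemma d_apply (M : Fin i → Matrix (Fin n) (Fin n) R) (w : Fin n → R) :
    (x • (1 : Matrix (Fin n) (Fin n) R) + ∑ j, y j • M j) *ᵥ w
      = x • w + ∑ j, y j • (M j *ᵥ w) := by
  rw [Matrix.add_mulVec, Matrix.smul_mulVec, Matrix.one_mulVec, sum_mulVec]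
  exact congrArg _ (Finset.sum_congr rfl fun j _ => Matrix.smul_mulVec _ _ _)

lemma σ_apply (M : Fin i → Matrix (Fin n) (Fin n) R) (w : Fin n → R) :
    (x • (1 : Matrix (Fin n) (Fin n) R) - ∑ j, y j • M j) *ᵥ w
      = x • w - ∑ j, y j • (M j *ᵥ w) := by
  rw [Matrix.sub_mulVec, Matrix.smul_mulVec, Matrix.one_mulVec, sum_mulVec]
  exact congrArg _ (Finset.sum_congr rfl fun j _ => Matrix.smul_mulVec _ _ _)

/-- image of a `k`-vector in `R`-vectors -/
def AV (u : Fin n → k) : Fin n → R := fun r => algebraMap k R (u r)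

lemma AV_add (u u' : Fin n → k) : (AV (u + u') : Fin n → R) = AV u + AV u' :=
  funext fun r => by simp [AV, map_add]

lemma AV_mulVec (C : Matrix (Fin n) (Fin n) k) (u : Fin n → k) :
    (C.map (algebraMap k R)) *ᵥ (AV u) = AV (C *ᵥ u) :=
  funext fun r => (RingHom.map_mulVec (algebraMap k R) C u r).symm

lemma ker_eq_range
    (hx : x * x = 0) (hyy : ∀ j l, y j * y l = 0)
    (hdec : ∀ s : R, ∃ (a b : k) (c e : Fin i → k),
      s = algebraMap k R a + algebraMap k R b * x +
        (∑ j, algebraMap k R (c j) * y j) +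
        (∑ j, algebraMap k R (e j) * (x * y j)))
    (hind : ∀ (a b : k) (c e : Fin i → k),
      algebraMap k R a + algebraMap k R b * x +
        (∑ j, algebraMap k R (c j) * y j) +
        (∑ j, algebraMap k R (e j) * (x * y j)) = 0 →
      a = 0 ∧ b = 0 ∧ (∀ j, c j = 0) ∧ (∀ j, e j = 0))
    (B : Fin i → Matrix (Fin n) (Fin n) k) :
    LinearMap.ker (Matrix.mulVecLin (x • (1 : Matrix (Fin n) (Fin n) R) +
        ∑ j, y j • (B j).map (algebraMap k R)))
      = LinearMap.range (Matrix.mulVecLin (x • (1 : Matrix (Fin n) (Fin n) R) -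
        ∑ j, y j • (B j).map (algebraMap k R))) := by
  apply le_antisymm
  · -- ker ⊆ range
    intro v hv
    rw [LinearMap.mem_ker, Matrix.mulVecLin_apply] at hv
    rw [d_apply] at hv
    choose a b c e hdec' using fun r => hdec (v r)
    have hv_eq : v = AV a + x • AV b
        + (∑ j, y j • AV (fun r => c r j))
        + ∑ j, (x * y j) • AV (fun r => e r j) := by
      funext r
      simp only [Pi.add_apply, Pi.smul_apply, Finset.sum_apply, smul_eq_mul, AV]
      have hs1 : ∑ j, algebraMap k R (c r j) * y j = ∑ j, y j * algebraMap k R (c r j) :=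
        Finset.sum_congr rfl fun j _ => mul_comm _ _
      have hs2 : ∑ j, algebraMap k R (e r j) * (x * y j)
          = ∑ j, x * y j * algebraMap k R (e r j) :=
        Finset.sum_congr rfl fun j _ => by ring
      rw [hdec' r, hs1, hs2, mul_comm (algebraMap k R (b r)) x]
    have key : (x • v + ∑ j, y j • ((B j).map (algebraMap k R) *ᵥ v))
        = x • AV a + (∑ j, y j • AV ((B j) *ᵥ a))
          + ∑ j, (x * y j) • AV ((B j) *ᵥ b + fun r => c r j) := by
      rw [hv_eq]
      simp only [Matrix.mulVec_add, Matrix.mulVec_smul, mulVec_sumv, AV_mulVec,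
        smul_add, Finset.smul_sum, smul_smul, hx, zero_smul, add_zero, zero_add,
        Finset.sum_add_distrib, AV_add]
      have hz1 : ∀ j l : Fin i, (y j * (x * y l)) • (AV ((B j) *ᵥ fun r => e r l) : Fin n → R)
          = 0 := fun j l => by
        rw [show y j * (x * y l) = x * (y j * y l) from by ring, hyy, mul_zero, zero_smul]
      have hz2 : ∀ j l : Fin i, (y j * y l) • (AV ((B j) *ᵥ fun r => c r l) : Fin n → R)
          = 0 := fun j l => by rw [hyy, zero_smul]
      have hz3 : ∀ j : Fin i, (x * (x * y j)) • (AV (fun r => e r j) : Fin n → R) = 0 :=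
        fun j => by
          rw [show x * (x * y j) = x * x * y j from by ring, hx, zero_mul, zero_smul]
      simp only [hz1, hz2, hz3, Finset.sum_const_zero, add_zero, zero_add]
      have hyx : ∀ j : Fin i, (y j * x) • (AV ((B j) *ᵥ b) : Fin n → R)
          = (x * y j) • (AV ((B j) *ᵥ b) : Fin n → R) := fun j => by rw [mul_comm]
      simp only [hyx, smul_add]
      abel
    rw [key] at hv
    have h0 : ∀ r, a r = 0 ∧ ∀ j, ((B j) *ᵥ b + fun r' => c r' j) r = 0 := by
      intro r
      have h1 := congrFun hv r
      simp only [Pi.add_apply, Pi.smul_apply, Finset.sum_apply, smul_eq_mul,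
        Pi.zero_apply, AV] at h1
      have h2 : algebraMap k R 0 + algebraMap k R (a r) * x +
          (∑ j, algebraMap k R (((B j) *ᵥ a) r) * y j) +
          (∑ j, algebraMap k R (((B j) *ᵥ b + fun r' => c r' j) r) * (x * y j)) = 0 := by
        rw [map_zero, zero_add]
        rw [← h1]
        congr 1
        · congr 1
          · ring
          · exact Finset.sum_congr rfl fun j _ => by ring
        · exact Finset.sum_congr rfl fun j _ => by
            simp only [Pi.add_apply]; ring
      obtain ⟨-, h3, -, h4⟩ := hind _ _ _ _ h2
      exact ⟨h3, h4⟩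
    refine ⟨AV b + ∑ j, y j • AV (fun r => e r j), ?_⟩
    rw [Matrix.mulVecLin_apply, σ_apply]
    have e2 : ∀ j, (B j).map (algebraMap k R) *ᵥ
        ((AV b : Fin n → R) + ∑ l, y l • AV (fun r => e r l))
        = AV ((B j) *ᵥ b) + ∑ l, y l • AV ((B j) *ᵥ fun r => e r l) := by
      intro j
      rw [Matrix.mulVec_add, mulVec_sumv, AV_mulVec]
      congr 1
      exact Finset.sum_congr rfl fun l _ => by rw [Matrix.mulVec_smul, AV_mulVec]
    simp only [e2, smul_add, Finset.smul_sum, smul_smul, Finset.sum_add_distrib]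
    have hz2' : ∀ j l : Fin i, (y j * y l) • (AV ((B j) *ᵥ fun r => e r l) : Fin n → R) = 0 :=
      fun j l => by rw [hyy, zero_smul]
    simp only [hz2', Finset.sum_const_zero, add_zero]
    rw [hv_eq]
    have hca : (AV a : Fin n → R) = 0 := funext fun r => by
      show algebraMap k R (a r) = 0
      rw [(h0 r).1, map_zero]
    have hcc : ∀ j : Fin i, (AV (fun r => c r j) : Fin n → R) = -AV ((B j) *ᵥ b) := by
      intro j
      funext r
      have h5 : ((B j) *ᵥ b) r + c r j = 0 := (h0 r).2 j
      have h6 : c r j = -(((B j) *ᵥ b) r) := eq_neg_of_add_eq_zero_right h5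
      show algebraMap k R (c r j) = (-(AV ((B j) *ᵥ b) : Fin n → R)) r
      rw [h6, map_neg]
      rfl
    rw [hca]
    rw [Finset.sum_congr rfl fun j (_ : j ∈ Finset.univ) => congrArg (y j • ·) (hcc j)]
    simp only [smul_neg]
    rw [Finset.sum_neg_distrib]
    abel
  · -- range ⊆ ker
    rintro u ⟨w, rfl⟩
    simp only [LinearMap.mem_ker, Matrix.mulVecLin_apply]
    rw [σ_apply, d_apply]
    have e1 : ∀ j, (B j).map (algebraMap k R) *ᵥ
        (x • w - ∑ l, y l • ((B l).map (algebraMap k R) *ᵥ w))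
        = x • ((B j).map (algebraMap k R) *ᵥ w)
          - ∑ l, y l • ((B j).map (algebraMap k R) *ᵥ ((B l).map (algebraMap k R) *ᵥ w)) := by
      intro j
      rw [Matrix.mulVec_sub, Matrix.mulVec_smul, mulVec_sumv]
      congr 1
      exact Finset.sum_congr rfl fun l _ => Matrix.mulVec_smul _ _ _
    simp only [e1, smul_sub, smul_smul, hx, zero_smul, Finset.smul_sum,
      hyy, Finset.sum_const_zero, sub_zero]
    have hyx : ∀ j : Fin i, (y j * x) • ((B j).map (algebraMap k R) *ᵥ w)
        = (x * y j) • ((B j).map (algebraMap k R) *ᵥ w) := fun j => by rw [mul_comm]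
    simp only [hyx]
    abel

end Stmt10Gen

/-- For the `S_i`-linear maps `∂, σ : S_iⁿ → S_iⁿ` given by the matrices
`x·I + Σ B_j·y_j` and `x·I − Σ B_j·y_j`, the image of `∂` (the first syzygy of `coker ∂`)
is isomorphic as an `S_i`-module to `coker σ`; hence a minimal complete resolution of
`coker ∂` is periodic of period at most 2. -/
theorem stmt10 (k : Type) [Field k] [CharZero k] (i n : ℕ) (hi : 2 ≤ i) (hn : 1 ≤ n)
    (B : Fin i → Matrix (Fin n) (Fin n) k)
    (d σ : (Fin n → Sring k i) →ₗ[Sring k i] (Fin n → Sring k i))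
    (hd : d = Matrix.mulVecLin (xS k i • (1 : Matrix (Fin n) (Fin n) (Sring k i)) +
      ∑ j, yS k i j • (B j).map (algebraMap k (Sring k i))))
    (hσ : σ = Matrix.mulVecLin (xS k i • (1 : Matrix (Fin n) (Fin n) (Sring k i)) -
      ∑ j, yS k i j • (B j).map (algebraMap k (Sring k i)))) :
    Nonempty ((↥(LinearMap.range d)) ≃ₗ[Sring k i]
      ((Fin n → Sring k i) ⧸ LinearMap.range σ)) := by
  subst hd hσ
  have h := Stmt10Gen.ker_eq_range (xS k i) (yS k i) (Stmt10Aux.x_mul_x k i)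
    (Stmt10Aux.y_mul_y k i) (Stmt10Aux.span_decomp k i) (Stmt10Aux.indep k i) B
  exact ⟨(LinearMap.quotKerEquivRange _).symm.trans (Submodule.quotEquivOfEq _ _ h)⟩
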